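/- Let f : ℝ^m → ℝ be continuously differentiable on a box x with center c and radius vector r. Suppose ∇̲ ∈ ℝ^m (componentwise nonnegative) satisfies ∇̲_i ≤ |∂f/∂x_i (c₁,…,c_{i−1}, ξ_i, …, ξ_m)| for all ξ ∈ x and all i (i.e., ∇̲_i is a lower bound of the absolute partial derivative on the slice where the first i−1 coordinates are fixed at the center). Then the interval [f(c) − ⟨∇̲, r⟩, f(c) + ⟨∇̲, r⟩] is contained in the range of f over the box x: every z in this interval equals f(x) for some x ∈ x. -/

import Mathlib

lemma slide_lemma (g D : ℝ → ℝ) (a b : ℝ) (hab : a ≤ b) (L : ℝ) (hL0 : 0 ≤ L)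
    (hg : ∀ t ∈ Set.Icc a b, HasDerivWithinAt g (D t) (Set.Icc a b) t)
    (hD : ∀ t ∈ Set.Icc a b, L ≤ |D t|) :
    (∃ u ∈ Set.Icc a b, g ((a + b) / 2) + L * ((b - a) / 2) ≤ g u) ∧
    (∃ d ∈ Set.Icc a b, g d ≤ g ((a + b) / 2) - L * ((b - a) / 2)) := by
  set c : ℝ := (a + b) / 2 with hc
  have hca : a ≤ c := by rw [hc]; linarith
  have hcb : c ≤ b := by rw [hc]; linarith
  have hcmem : c ∈ Set.Icc a b := ⟨hca, hcb⟩
  rcases eq_or_lt_of_le hL0 with hL | hL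
  · exact ⟨⟨c, hcmem, by rw [← hL]; ring_nf; exact le_refl _⟩,
      ⟨c, hcmem, by rw [← hL]; ring_nf; exact le_refl _⟩⟩
  rcases eq_or_lt_of_le hab with hab' | hab'
  · subst hab'
    have hc0 : c = a := by rw [hc]; ring
    exact ⟨⟨c, hcmem, by rw [hc0]; ring_nf; exact le_refl _⟩,
      ⟨c, hcmem, by rw [hc0]; ring_nf; exact le_refl _⟩⟩
  -- nondegenerate case: derivative has constant sign by Darboux
  have hgc : ContinuousOn g (Set.Icc a b) := fun t ht => (hg t ht).continuousWithinAt
  -- sign dichotomy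
  have hsign : (∀ t ∈ Set.Icc a b, L ≤ D t) ∨ (∀ t ∈ Set.Icc a b, D t ≤ -L) := by
    by_contra h
    push_neg at h
    obtain ⟨⟨t1, ht1, ht1'⟩, ⟨t2, ht2, ht2'⟩⟩ := h
    -- D t1 < L with |D t1| ≥ L forces D t1 ≤ -L < 0; D t2 > -L forces D t2 ≥ L > 0
    have h1 : D t1 ≤ -L := by
      rcases le_or_gt (D t1) 0 with h | h
      · have := hD t1 ht1; rw [abs_of_nonpos h] at this; linarith
      · have := hD t1 ht1; rw [abs_of_pos h] at this; linarith
    have h2 : L ≤ D t2 := by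
      rcases le_or_gt (D t2) 0 with h | h
      · have := hD t2 ht2; rw [abs_of_nonpos h] at this; linarith
      · have := hD t2 ht2; rw [abs_of_pos h] at this; linarith
    -- Darboux: 0 is between D t1 and D t2, so D vanishes somewhere in Icc a b
    have hoc : Set.OrdConnected (D '' Set.Icc a b) :=
      (Set.ordConnected_Icc).image_hasDerivWithinAt hg
    have h0 : (0 : ℝ) ∈ D '' Set.Icc a b := by
      have := hoc.out (Set.mem_image_of_mem D ht1) (Set.mem_image_of_mem D ht2)
      exact this ⟨by linarith, by linarith⟩
    obtain ⟨t0, ht0, ht0'⟩ := h0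
    have := hD t0 ht0
    rw [ht0'] at this
    simp at this
    linarith
  have haderiv : ∀ t ∈ Set.Ioo a b, HasDerivAt g (D t) t := by
    intro t ht
    exact (hg t (Set.Ioo_subset_Icc_self ht)).hasDerivAt (Icc_mem_nhds ht.1 ht.2)
  have hcbne : c < b := by rw [hc]; linarith
  have hacne : a < c := by rw [hc]; linarith
  -- MVT on [c,b]
  obtain ⟨t₁, ht₁, ht₁'⟩ := exists_hasDerivAt_eq_slope g D hcbne
    (hgc.mono (Set.Icc_subset_Icc hca le_rfl))
    (fun t ht => haderiv t ⟨lt_trans hacne ht.1, ht.2⟩)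
  -- MVT on [a,c]
  obtain ⟨t₂, ht₂, ht₂'⟩ := exists_hasDerivAt_eq_slope g D hacne
    (hgc.mono (Set.Icc_subset_Icc le_rfl hcb))
    (fun t ht => haderiv t ⟨ht.1, lt_trans ht.2 hcbne⟩)
  have ht₁m : t₁ ∈ Set.Icc a b := ⟨le_of_lt (lt_of_le_of_lt hca ht₁.1), le_of_lt ht₁.2⟩
  have ht₂m : t₂ ∈ Set.Icc a b := ⟨le_of_lt ht₂.1, le_of_lt (lt_of_lt_of_le ht₂.2 hcb)⟩
  have hbc2 : b - c = (b - a) / 2 := by rw [hc]; ring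
  have hca2 : c - a = (b - a) / 2 := by rw [hc]; ring
  rcases hsign with hpos | hneg
  · -- derivative ≥ L everywhere: u = b, d = a
    have e1 : g b - g c = D t₁ * ((b - a) / 2) := by
      rw [← hbc2, ht₁', div_mul_cancel₀ _ (by linarith : b - c ≠ 0)]
    have e2 : g c - g a = D t₂ * ((b - a) / 2) := by
      rw [← hca2, ht₂', div_mul_cancel₀ _ (by linarith : c - a ≠ 0)]
    have hb1 : L * ((b - a) / 2) ≤ D t₁ * ((b - a) / 2) :=
      mul_le_mul_of_nonneg_right (hpos t₁ ht₁m) (by linarith)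
    have hb2 : L * ((b - a) / 2) ≤ D t₂ * ((b - a) / 2) :=
      mul_le_mul_of_nonneg_right (hpos t₂ ht₂m) (by linarith)
    exact ⟨⟨b, ⟨hab, le_rfl⟩, by linarith⟩, ⟨a, ⟨le_rfl, hab⟩, by linarith⟩⟩
  · -- derivative ≤ -L everywhere: u = a, d = b
    have e1 : g b - g c = D t₁ * ((b - a) / 2) := by
      rw [← hbc2, ht₁', div_mul_cancel₀ _ (by linarith : b - c ≠ 0)]
    have e2 : g c - g a = D t₂ * ((b - a) / 2) := by
      rw [← hca2, ht₂', div_mul_cancel₀ _ (by linarith : c - a ≠ 0)]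
    have hb1 : D t₁ * ((b - a) / 2) ≤ (-L) * ((b - a) / 2) :=
      mul_le_mul_of_nonneg_right (hneg t₁ ht₁m) (by linarith)
    have hb2 : D t₂ * ((b - a) / 2) ≤ (-L) * ((b - a) / 2) :=
      mul_le_mul_of_nonneg_right (hneg t₂ ht₂m) (by linarith)
    exact ⟨⟨a, ⟨le_rfl, hab⟩, by linarith⟩, ⟨b, ⟨hab, le_rfl⟩, by linarith⟩⟩

lemma update_hasDerivAt {m : ℕ} (x : Fin m → ℝ) (i : Fin m) (t : ℝ) :
    HasDerivAt (fun s : ℝ => Function.update x i s) (Pi.single i 1) t := by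
  have heq : (fun s : ℝ => Function.update x i s)
      = fun s : ℝ => x + (s - x i) • (Pi.single i (1 : ℝ) : Fin m → ℝ) := by
    funext s
    funext j
    by_cases hj : j = i
    · subst hj; simp
    · simp [Function.update_apply, hj, Pi.single_apply, Ne.symm hj]
  rw [heq]
  have h1 : HasDerivAt (fun s : ℝ => s - x i) 1 t := (hasDerivAt_id t).sub_const (x i)
  have h2 := (h1.smul_const (Pi.single i (1 : ℝ))).const_add x
  simpa using h2

lemma key_induction {m : ℕ} (f : (Fin m → ℝ) → ℝ) (lo hi : Fin m → ℝ)
    (hle : lo ≤ hi) (L : Fin m → ℝ) (hLpos : ∀ i, 0 ≤ L i)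
    (hf : ContDiffOn ℝ 1 f (Set.Icc lo hi))
    (hL : ∀ ξ ∈ Set.Icc lo hi, ∀ i : Fin m,
      L i ≤ |fderivWithin ℝ f (Set.Icc lo hi)
              (fun j => if (j : ℕ) < (i : ℕ) then (lo j + hi j) / 2 else ξ j)
              (Pi.single i 1)|) :
    ∀ d k : ℕ, k + d = m →
      (∃ x ∈ Set.Icc lo hi, (∀ j : Fin m, (j : ℕ) < k → x j = (lo j + hi j) / 2) ∧
        f (fun i => (lo i + hi i) / 2)
          + ∑ i ∈ Finset.univ.filter (fun i : Fin m => k ≤ (i : ℕ)),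
              L i * ((hi i - lo i) / 2) ≤ f x) ∧
      (∃ x ∈ Set.Icc lo hi, (∀ j : Fin m, (j : ℕ) < k → x j = (lo j + hi j) / 2) ∧
        f x ≤ f (fun i => (lo i + hi i) / 2)
          - ∑ i ∈ Finset.univ.filter (fun i : Fin m => k ≤ (i : ℕ)),
              L i * ((hi i - lo i) / 2)) := by
  have hcmem : (fun i => (lo i + hi i) / 2) ∈ Set.Icc lo hi := by
    constructor <;> intro i <;> have := hle i <;> simp <;> linarith [hle i]
  intro d
  induction d with
  | zero =>
    intro k hk
    have hfil : Finset.univ.filter (fun i : Fin m => k ≤ (i : ℕ)) = ∅ := by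
      apply Finset.filter_false_of_mem
      intro i _
      omega
    refine ⟨⟨_, hcmem, fun j hj => rfl, ?_⟩, ⟨_, hcmem, fun j hj => rfl, ?_⟩⟩ <;>
      simp [hfil]
  | succ d ih =>
    intro k hk
    obtain ⟨⟨x, hx, hxc, hxf⟩, ⟨y, hy, hyc, hyf⟩⟩ := ih (k + 1) (by omega)
    have hkm : k < m := by omega
    set ik : Fin m := ⟨k, hkm⟩ with hik
    have hikv : ((ik : Fin m) : ℕ) = k := rfl
    -- sum splitting
    have hsplit : ∑ i ∈ Finset.univ.filter (fun i : Fin m => k ≤ (i : ℕ)),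
        L i * ((hi i - lo i) / 2)
        = L ik * ((hi ik - lo ik) / 2)
          + ∑ i ∈ Finset.univ.filter (fun i : Fin m => k + 1 ≤ (i : ℕ)),
              L i * ((hi i - lo i) / 2) := by
      have h1 : Finset.univ.filter (fun i : Fin m => k ≤ (i : ℕ))
          = insert ik (Finset.univ.filter (fun i : Fin m => k + 1 ≤ (i : ℕ))) := by
        ext j
        simp only [Finset.mem_filter, Finset.mem_univ, true_and, Finset.mem_insert]
        constructor
        · intro h
          rcases Nat.eq_or_lt_of_le h with h' | h'
          · left; exact Fin.ext h'.symm
          · right; omega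
        · rintro (rfl | h)
          · exact le_refl _
          · omega
      rw [h1, Finset.sum_insert (by simp [hikv])]
    -- generic construction of the derivative data for a base point z
    have main : ∀ z : (Fin m → ℝ), z ∈ Set.Icc lo hi →
        (∀ j : Fin m, (j : ℕ) < k + 1 → z j = (lo j + hi j) / 2) →
        (∃ u ∈ Set.Icc lo hi, (∀ j : Fin m, (j : ℕ) < k → u j = (lo j + hi j) / 2) ∧
          f z + L ik * ((hi ik - lo ik) / 2) ≤ f u) ∧
        (∃ v ∈ Set.Icc lo hi, (∀ j : Fin m, (j : ℕ) < k → v j = (lo j + hi j) / 2) ∧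
          f v ≤ f z - L ik * ((hi ik - lo ik) / 2)) := by
      intro z hz hzc
      have hmem : ∀ t ∈ Set.Icc (lo ik) (hi ik), Function.update z ik t ∈ Set.Icc lo hi := by
        intro t ht
        constructor <;> intro j <;> by_cases hj : j = ik
        · subst hj; simpa using ht.1
        · simpa [Function.update_apply, hj] using hz.1 j
        · subst hj; simpa using ht.2
        · simpa [Function.update_apply, hj] using hz.2 j
      set g : ℝ → ℝ := fun t => f (Function.update z ik t) with hg
      set D : ℝ → ℝ := fun t =>
        fderivWithin ℝ f (Set.Icc lo hi) (Function.update z ik t) (Pi.single ik 1) with hDdef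
      have hgd : ∀ t ∈ Set.Icc (lo ik) (hi ik),
          HasDerivWithinAt g (D t) (Set.Icc (lo ik) (hi ik)) t := by
        intro t ht
        have hdiff : DifferentiableWithinAt ℝ f (Set.Icc lo hi) (Function.update z ik t) :=
          (hf.differentiableOn one_ne_zero) _ (hmem t ht)
        have hF := hdiff.hasFDerivWithinAt
        have hpath : HasDerivWithinAt (fun s : ℝ => Function.update z ik s)
            (Pi.single ik 1) (Set.Icc (lo ik) (hi ik)) t :=
          (update_hasDerivAt z ik t).hasDerivWithinAt
        exact hF.comp_hasDerivWithinAt t hpath hmem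
      have hDb : ∀ t ∈ Set.Icc (lo ik) (hi ik), L ik ≤ |D t| := by
        intro t ht
        have h := hL (Function.update z ik t) (hmem t ht) ik
        have heq : (fun j : Fin m => if (j : ℕ) < (ik : ℕ) then (lo j + hi j) / 2
            else Function.update z ik t j) = Function.update z ik t := by
          funext j
          by_cases hj : (j : ℕ) < (ik : ℕ)
          · have hj' : (j : ℕ) < k := hikv ▸ hj
            have hjne : j ≠ ik := Fin.ne_of_val_ne (show (j : ℕ) ≠ k by omega)
            simp only [hj, if_true, Function.update_apply, hjne, if_false]
            exact (hzc j (by omega)).symm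
          · simp [hj]
        rwa [heq] at h
      obtain ⟨⟨u, hu, hgu⟩, ⟨v, hv, hgv⟩⟩ :=
        slide_lemma g D (lo ik) (hi ik) (hle ik) (L ik) (hLpos ik) hgd hDb
      have hzik : z ik = (lo ik + hi ik) / 2 := hzc ik (Nat.lt_succ_self k)
      have hgc : g ((lo ik + hi ik) / 2) = f z := by
        rw [hg]
        simp only
        rw [← hzik, Function.update_eq_self]
      refine ⟨⟨Function.update z ik u, hmem u hu, ?_, ?_⟩,
        ⟨Function.update z ik v, hmem v hv, ?_, ?_⟩⟩
      · intro j hj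
        have hjne : j ≠ ik := Fin.ne_of_val_ne (show (j : ℕ) ≠ k by omega)
        rw [Function.update_apply, if_neg hjne]
        exact hzc j (by omega)
      · rw [← hgc]; exact hgu
      · intro j hj
        have hjne : j ≠ ik := Fin.ne_of_val_ne (show (j : ℕ) ≠ k by omega)
        rw [Function.update_apply, if_neg hjne]
        exact hzc j (by omega)
      · rw [← hgc]; exact hgv
    obtain ⟨⟨u, hu, huc, huf⟩, _⟩ := main x hx hxc
    obtain ⟨_, ⟨v, hv, hvc, hvf⟩⟩ := main y hy hyc
    refine ⟨⟨u, hu, huc, ?_⟩, ⟨v, hv, hvc, ?_⟩⟩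
    · rw [hsplit]; linarith
    · rw [hsplit]; linarith

/-- Under-approximation half of the mean-value AE extension (Theorem 1):
if `L i ≥ 0` lower-bounds `|∂f/∂x_i|` on the slice of the box where the first
`i-1` coordinates are fixed at the center, then the interval
`[f(c) − ⟨L, r⟩, f(c) + ⟨L, r⟩]` is contained in the range of `f` over the box. -/
theorem meanValue_under_approx {m : ℕ} (f : (Fin m → ℝ) → ℝ) (lo hi : Fin m → ℝ)
    (hle : lo ≤ hi) (L : Fin m → ℝ) (hLpos : ∀ i, 0 ≤ L i)
    (hf : ContDiffOn ℝ 1 f (Set.Icc lo hi))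
    (hL : ∀ ξ ∈ Set.Icc lo hi, ∀ i : Fin m,
      L i ≤ |fderivWithin ℝ f (Set.Icc lo hi)
              (fun j => if (j : ℕ) < (i : ℕ) then (lo j + hi j) / 2 else ξ j)
              (Pi.single i 1)|) :
    Set.Icc
      (f (fun i => (lo i + hi i) / 2) - ∑ i, L i * ((hi i - lo i) / 2))
      (f (fun i => (lo i + hi i) / 2) + ∑ i, L i * ((hi i - lo i) / 2))
      ⊆ f '' Set.Icc lo hi := by
  obtain ⟨⟨xp, hxp, _, hxpf⟩, ⟨xm, hxm, _, hxmf⟩⟩ :=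
    key_induction f lo hi hle L hLpos hf hL m 0 (by omega)
  have hfil : Finset.univ.filter (fun i : Fin m => 0 ≤ (i : ℕ)) = Finset.univ := by
    apply Finset.filter_true_of_mem; intro i _; omega
  rw [hfil] at hxpf hxmf
  intro z hz
  have hconn : IsPreconnected (Set.Icc lo hi) := (convex_Icc lo hi).isPreconnected
  have hcont : ContinuousOn f (Set.Icc lo hi) := hf.continuousOn
  apply hconn.intermediate_value hxm hxp hcont
  exact ⟨le_trans hxmf hz.1, le_trans hz.2 hxpf⟩
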